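/- Let A be a C*-algebra equipped with an action of a finite group Γ. Then the map sending a ∈ A to Σ_{γ∈Γ} γ(a) ⊗ e_γ and sending γ ∈ Γ to 1 ⊗ ρ(γ) extends to a *-isomorphism from the crossed product A ⋊ Γ onto the fixed-point algebra (A ⊗ 𝔎(ℓ²Γ))^{Γ,λ}, where Γ acts diagonally via its action on A and the conjugation action λ coming from the left regular representation on 𝔎(ℓ²Γ). -/
import Mathlib


/-!
STATEMENT 4 (Rieffel's isomorphism): Let `A` be a C*-algebra with an action
`α` of a finite group `Γ` by *-automorphisms.  Realizing the crossed product
`A ⋊ Γ` concretely as the space of functions `Γ → A` with the twisted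
convolution product and involution, and `A ⊗ 𝔎(ℓ²Γ)` as `Γ × Γ` matrices
over `A`, the map `a ↦ Σ_γ γ(a) ⊗ e_γ`, `γ ↦ 1 ⊗ ρ(γ)` becomes the map
`Φ(f)(γ₁, γ₂) = α_{γ₁}(f(γ₁⁻¹γ₂))`.  The theorem asserts that `Φ` is a
*-isomorphism from `A ⋊ Γ` onto the fixed-point algebra
`(A ⊗ 𝔎(ℓ²Γ))^{Γ,λ}` for the diagonal action combining `α` with conjugation
by the left regular representation.
-/

section
variable {Γ A : Type} [Group Γ] [Fintype Γ] [DecidableEq Γ]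
  [NonUnitalNormedRing A] [StarRing A] [CStarRing A]
  [NormedSpace ℂ A] [StarModule ℂ A]
  (α : Γ → (A ≃⋆ₐ[ℂ] A))

/-- twisted convolution product on the crossed product `A ⋊ Γ` -/
noncomputable def crossedMul (f g : Γ → A) : Γ → A :=
  fun γ => ∑ η : Γ, f η * α η (g (η⁻¹ * γ))

/-- involution on the crossed product `A ⋊ Γ` -/
def crossedStar (f : Γ → A) : Γ → A :=
  fun γ => α γ (star (f γ⁻¹))

/-- Rieffel's map `A ⋊ Γ → A ⊗ 𝔎(ℓ²Γ)` -/
def rieffelMap (f : Γ → A) : Matrix Γ Γ A :=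
  fun γ₁ γ₂ => α γ₁ (f (γ₁⁻¹ * γ₂))

theorem rieffel_isomorphism
    (hα_one : ∀ a : A, α 1 a = a)
    (hα_mul : ∀ (g h : Γ) (a : A), α (g * h) a = α g (α h a)) :
    -- `Φ` is injective
    Function.Injective (rieffelMap α) ∧
    -- the range of `Φ` is the fixed-point algebra of the diagonal action
    Set.range (rieffelMap α) =
      {M : Matrix Γ Γ A | ∀ γ γ₁ γ₂ : Γ,
        α γ (M (γ⁻¹ * γ₁) (γ⁻¹ * γ₂)) = M γ₁ γ₂} ∧
    -- `Φ` is an algebra *-homomorphism for the crossed product operations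
    (∀ f g : Γ → A, rieffelMap α (crossedMul α f g) =
      rieffelMap α f * rieffelMap α g) ∧
    (∀ f : Γ → A, rieffelMap α (crossedStar α f) = (rieffelMap α f).conjTranspose) ∧
    (∀ f g : Γ → A, rieffelMap α (f + g) = rieffelMap α f + rieffelMap α g) ∧
    (∀ (z : ℂ) (f : Γ → A), rieffelMap α (z • f) = z • rieffelMap α f) ∧
    -- on `A` it is the map `a ↦ Σ_γ γ(a) ⊗ e_γ`
    (∀ a : A, rieffelMap α (fun γ => if γ = 1 then a else 0) =
      Matrix.diagonal fun γ => α γ a) := by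

  refine ⟨?_, ?_, ?_, ?_, ?_, ?_, ?_⟩
  · intro f g h
    funext γ
    have := congrFun (congrFun h 1) γ
    simpa [rieffelMap, hα_one] using this
  · ext M
    constructor
    · rintro ⟨f, rfl⟩ γ γ₁ γ₂
      simp only [rieffelMap]
      rw [← hα_mul]
      congr 1
      · group
      · congr 1; group
    · intro hM
      refine ⟨fun γ => M 1 γ, ?_⟩
      funext γ₁ γ₂
      simpa [rieffelMap] using hM γ₁ γ₁ γ₂
  · intro f g
    funext γ₁ γ₂
    simp only [rieffelMap, crossedMul, Matrix.mul_apply, map_sum]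
    refine Fintype.sum_equiv (Equiv.mulLeft γ₁) _ _ fun η => ?_
    simp only [Equiv.coe_mulLeft, map_mul, ← hα_mul, inv_mul_cancel_left,
      mul_inv_rev, mul_assoc]
  · intro f
    funext γ₁ γ₂
    simp only [rieffelMap, crossedStar, Matrix.conjTranspose_apply]
    rw [← hα_mul, ← map_star]
    congr 2
    · group
    · congr 2; group
  · intro f g
    funext γ₁ γ₂
    simp [rieffelMap, map_add]
  · intro z f
    funext γ₁ γ₂
    simp [rieffelMap, map_smul]
  · intro a
    funext γ₁ γ₂
    by_cases h : γ₁ = γ₂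
    · subst h
      simp [rieffelMap, Matrix.diagonal]
    · have h' : γ₁⁻¹ * γ₂ ≠ 1 := fun hc => h (by
        have := congrArg (γ₁ * ·) hc; simpa [mul_assoc] using this.symm)
      simp [rieffelMap, Matrix.diagonal, h', Ne.symm h, h]


end
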